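/- Let G = (V,E;w) be a finite simple undirected graph with positive integer vertex weights and no isolated vertices, and let α* be its minimal α-ratio. If 0 < ε ≤ 1/w(V)³, then every nonempty set B̂ ⊆ V that minimizes cap(B,ε) over all nonempty B ⊆ V is the maximal bottleneck of G. -/

import Mathlib

open Finset

/-- The total weight of a finite set of vertices. -/
def wsum {V : Type*} (w : V → ℝ) (S : Finset V) : ℝ := ∑ v ∈ S, w v

/-- The neighborhood `Γ(S)` of a set `S` of vertices: all vertices adjacent to at least one
vertex of `S`. -/
def nbhd {V : Type*} [Fintype V] [DecidableEq V] (G : SimpleGraph V) [DecidableRel G.Adj]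
    (S : Finset V) : Finset V :=
  univ.filter fun v => ∃ u ∈ S, G.Adj u v

/-- The α-ratio `α(S) = w(Γ(S)) / w(S)` of a set `S`. -/
noncomputable def alphaR {V : Type*} [Fintype V] [DecidableEq V] (G : SimpleGraph V)
    [DecidableRel G.Adj] (w : V → ℝ) (S : Finset V) : ℝ :=
  wsum w (nbhd G S) / wsum w S

/-- `B` is a maximal bottleneck: it is nonempty, its α-ratio is minimal among all nonempty
subsets (i.e. `α(B) = α*`), and every strictly larger subset has strictly larger α-ratio. -/
def IsMaxBottleneck {V : Type*} [Fintype V] [DecidableEq V] (G : SimpleGraph V)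
    [DecidableRel G.Adj] (w : V → ℝ) (B : Finset V) : Prop :=
  B.Nonempty ∧ (∀ S : Finset V, S.Nonempty → alphaR G w B ≤ alphaR G w S) ∧
    ∀ B' : Finset V, B ⊂ B' → alphaR G w B < alphaR G w B'

/-- The capacity `cap(B,ε) = α*·(w(V) − w(B)) + w(Γ(B)) + (n − |B|)·ε` of the cut with
source side `{s} ∪ B ∪ {ũ : u ∈ Γ(B)}` in the network `N(G,α*,ε)`, where `n = |V|`. -/
noncomputable def capEps {V : Type*} [Fintype V] [DecidableEq V] (G : SimpleGraph V)
    [DecidableRel G.Adj] (w : V → ℝ) (astar eps : ℝ) (B : Finset V) : ℝ :=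
  astar * (wsum w univ - wsum w B) + wsum w (nbhd G B) +
    ((Fintype.card V : ℝ) - B.card) * eps

/-- for positive integer weights and `0 < ε ≤ 1/w(V)³`, every nonempty
`B̂ ⊆ V` minimizing `cap(B,ε)` over all nonempty `B ⊆ V` is the maximal bottleneck. -/
theorem small_eps_min_capEps_is_maximal_bottleneck {V : Type*} [Fintype V] [DecidableEq V]
    (G : SimpleGraph V) [DecidableRel G.Adj] (w : V → ℕ)
    (hw : ∀ v, 0 < w v) (hiso : ∀ v : V, ∃ u, G.Adj v u)
    (astar : ℝ)
    (hstar : IsLeast {r : ℝ | ∃ S : Finset V, S.Nonempty ∧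
      r = alphaR G (fun v => (w v : ℝ)) S} astar)
    (eps : ℝ) (heps : 0 < eps)
    (heps' : eps ≤ 1 / (wsum (fun v => (w v : ℝ)) univ) ^ 3)
    (Bhat : Finset V) (hne : Bhat.Nonempty)
    (hmin : ∀ B : Finset V, B.Nonempty →
      capEps G (fun v => (w v : ℝ)) astar eps Bhat ≤
        capEps G (fun v => (w v : ℝ)) astar eps B) :
    IsMaxBottleneck G (fun v => (w v : ℝ)) Bhat := by
  classical
  set wR : V → ℝ := fun v => (w v : ℝ) with hwRdef
  have hws : ∀ S : Finset V, wsum wR S = ((∑ v ∈ S, w v : ℕ) : ℝ) := by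
    intro S; simp [wsum, wR]
  have hpos : ∀ S : Finset V, S.Nonempty → (0:ℝ) < wsum wR S := by
    intro S hS
    rw [hws]
    exact_mod_cast Finset.sum_pos (fun v _ => hw v) hS
  have hmono : ∀ S : Finset V, wsum wR S ≤ wsum wR univ := by
    intro S
    rw [hws, hws]
    exact_mod_cast Finset.sum_le_sum_of_subset (subset_univ S)
  set W : ℝ := wsum wR univ with hWdef
  have hVne : Nonempty V := ⟨hne.choose⟩
  have hn2 : 2 ≤ Fintype.card V := by
    obtain ⟨v, hv⟩ := hne
    obtain ⟨u, hu⟩ := hiso v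
    exact Fintype.one_lt_card_iff.mpr ⟨v, u, G.ne_of_adj hu⟩
  have hnW : (Fintype.card V : ℝ) ≤ W := by
    rw [hWdef, hws]
    have : Fintype.card V ≤ ∑ v ∈ univ, w v := by
      calc Fintype.card V = ∑ _v ∈ (univ : Finset V), 1 := by simp
        _ ≤ ∑ v ∈ univ, w v := Finset.sum_le_sum (fun v _ => hw v)
    exact_mod_cast this
  have hW2 : (2:ℝ) ≤ W := le_trans (by exact_mod_cast hn2) hnW
  have hW0 : (0:ℝ) < W := by linarith
  obtain ⟨hmem, hlb⟩ := hstar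
  obtain ⟨S0, hS0ne, hS0⟩ := hmem
  have hq : 0 < wsum wR S0 := hpos S0 hS0ne
  have hSeq : astar * wsum wR S0 = wsum wR (nbhd G S0) := by
    rw [hS0, alphaR]; field_simp
  have hkey : ∀ S : Finset V, S.Nonempty → astar * wsum wR S ≤ wsum wR (nbhd G S) := by
    intro S hS
    have h := hlb ⟨S, hS, rfl⟩
    rw [alphaR] at h
    have hp := hpos S hS
    calc astar * wsum wR S ≤ (wsum wR (nbhd G S) / wsum wR S) * wsum wR S :=
          mul_le_mul_of_nonneg_right h hp.le
      _ = wsum wR (nbhd G S) := by field_simp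
  -- integrality gap for non-bottlenecks
  have hgap : ∀ B : Finset V, B.Nonempty →
      astar * wsum wR B ≠ wsum wR (nbhd G B) →
      astar * wsum wR B + 1 / W ≤ wsum wR (nbhd G B) := by
    intro B hB hne'
    have hlt : astar * wsum wR B < wsum wR (nbhd G B) := lt_of_le_of_ne (hkey B hB) hne'
    set q : ℕ := ∑ v ∈ S0, w v with hqdef
    set p : ℕ := ∑ v ∈ nbhd G S0, w v with hpdef
    set b : ℕ := ∑ v ∈ B, w v with hbdef
    set g : ℕ := ∑ v ∈ nbhd G B, w v with hgdef
    have hqpos : (0:ℝ) < (q:ℝ) := by rw [← hws]; exact hq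
    have hastar : astar = (p:ℝ) / q := by
      rw [hS0, alphaR, hws, hws]
    have h1 : (p:ℝ) * b < (g:ℝ) * q := by
      have h' := hlt
      rw [hastar, hws, hws] at h'
      rw [div_mul_eq_mul_div, div_lt_iff₀ hqpos] at h'
      exact h'
    have h2 : p * b + 1 ≤ g * q := by
      have : p * b < g * q := by exact_mod_cast h1
      omega
    have h2' : (p:ℝ) * b + 1 ≤ (g:ℝ) * q := by exact_mod_cast h2
    have hqW : (q:ℝ) ≤ W := by rw [← hws, hWdef]; exact hmono S0
    have h3 : astar * wsum wR B + 1 / (q:ℝ) ≤ wsum wR (nbhd G B) := by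
      rw [hastar, hws, hws, div_mul_eq_mul_div, ← add_div, div_le_iff₀ hqpos]
      linarith
    have h4 : 1 / W ≤ 1 / (q:ℝ) := one_div_le_one_div_of_le hqpos hqW
    linarith
  have hcard : ∀ B : Finset V, (B.card : ℝ) ≤ (Fintype.card V : ℝ) := by
    intro B
    exact_mod_cast Finset.card_le_card (subset_univ B)
  -- Bhat is a bottleneck
  have hbot : astar * wsum wR Bhat = wsum wR (nbhd G Bhat) := by
    by_contra hne'
    have hg := hgap Bhat hne hne'
    have hcap1 : astar * W + 1 / W ≤ capEps G wR astar eps Bhat := by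
      have h1 : (0:ℝ) ≤ ((Fintype.card V : ℝ) - Bhat.card) * eps :=
        mul_nonneg (by linarith [hcard Bhat]) heps.le
      unfold capEps
      linarith
    have hcap2 : capEps G wR astar eps S0 ≤ astar * W + 1 / W ^ 2 := by
      have h1 : ((Fintype.card V : ℝ) - S0.card) * eps ≤ W * eps := by
        apply mul_le_mul_of_nonneg_right _ heps.le
        have : (0:ℝ) ≤ (S0.card : ℝ) := Nat.cast_nonneg _
        linarith
      have h2 : W * eps ≤ 1 / W ^ 2 := by
        have := mul_le_mul_of_nonneg_left heps' hW0.le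
        calc W * eps ≤ W * (1 / W ^ 3) := this
          _ = 1 / W ^ 2 := by field_simp
      unfold capEps
      linarith
    have h12 : 1 / W ^ 2 < 1 / W := by
      apply div_lt_div_of_pos_left one_pos hW0
      nlinarith
    have := hmin S0 hS0ne
    linarith
  have halpha : alphaR G wR Bhat = astar := by
    rw [alphaR, eq_comm, eq_div_iff (ne_of_gt (hpos Bhat hne))]
    exact hbot
  refine ⟨hne, ?_, ?_⟩
  · intro S hS
    rw [halpha]
    exact hlb ⟨S, hS, rfl⟩
  · intro B' hsub
    by_contra hcon
    push_neg at hcon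
    have hB'ne : B'.Nonempty := hne.mono hsub.subset
    have hle : astar ≤ alphaR G wR B' := hlb ⟨B', hB'ne, rfl⟩
    have heq : alphaR G wR B' = astar := le_antisymm (by rw [← halpha]; exact hcon) hle
    have hbot' : astar * wsum wR B' = wsum wR (nbhd G B') := by
      rw [alphaR, div_eq_iff (ne_of_gt (hpos B' hB'ne))] at heq
      exact heq.symm
    have hcardlt : (Bhat.card : ℝ) < (B'.card : ℝ) := by
      exact_mod_cast Finset.card_lt_card hsub
    have hlt : capEps G wR astar eps B' < capEps G wR astar eps Bhat := by
      unfold capEps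
      have := mul_lt_mul_of_pos_right hcardlt heps
      linarith
    have := hmin B' hB'ne
    linarith
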